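/- Let Γ be a finite connected cubic G-vertex-transitive graph and let M be a normal subgroup of G such that the normal quotient graph Γ/M is also cubic. Then: (i) M is semiregular on the vertices of Γ; (ii) M equals the kernel of the action of G on the set of M-orbits on vertices; and (iii) for any subgroup H of G containing M, if H/M is semiregular on the vertices of Γ/M then H is semiregular on the vertices of Γ. -/

import Mathlib

/- STATEMENT 19:
Let Γ be a finite connected cubic G-vertex-transitive graph and let M be a normal
subgroup of G such that the normal quotient Γ/M is also cubic. Then:
(i) M is semiregular on the vertices of Γ;
(ii) M equals the kernel of the action of G on the set of M-orbits on vertices;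
(iii) for any subgroup H with M ≤ H ≤ G, if H/M is semiregular on the vertices of Γ/M
then H is semiregular on the vertices of Γ. -/

namespace Stmt19

/-- A set of permutations is semiregular if only the identity fixes a point. -/
def Semiregular {V : Type} (N : Subgroup (Equiv.Perm V)) : Prop :=
  ∀ n ∈ N, ∀ v : V, n v = v → n = 1

/-- The normal quotient graph `Γ/M`: vertices are the `M`-orbits, two distinct orbits
being adjacent iff some vertex of one is adjacent in `Γ` to some vertex of the other. -/
def quotGraph {V : Type} (Γ : SimpleGraph V) (M : Subgroup (Equiv.Perm V)) :
    SimpleGraph (Quotient (MulAction.orbitRel (↥M) V)) :=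
  SimpleGraph.fromRel (fun a b => ∃ u v : V,
    Quotient.mk (MulAction.orbitRel (↥M) V) u = a ∧
    Quotient.mk (MulAction.orbitRel (↥M) V) v = b ∧ Γ.Adj u v)

theorem stmt19 {V : Type} [Fintype V] (Γ : SimpleGraph V)
    (hconn : Γ.Connected)
    (hcubic : ∀ v : V, (Γ.neighborSet v).ncard = 3)
    (G : Subgroup (Equiv.Perm V))
    (hAut : ∀ g ∈ G, ∀ u v : V, Γ.Adj (g u) (g v) ↔ Γ.Adj u v)
    (hTrans : ∀ u v : V, ∃ g ∈ G, g u = v)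
    (M : Subgroup (Equiv.Perm V)) (hMG : M ≤ G)
    (hMnormal : ∀ g ∈ G, ∀ m ∈ M, g * m * g⁻¹ ∈ M)
    (hquotcubic : ∀ q, ((quotGraph Γ M).neighborSet q).ncard = 3) :
    -- (i) M is semiregular on the vertices of Γ
    Semiregular M ∧
    -- (ii) M is the kernel of the action of G on the set of M-orbits
    ({g : Equiv.Perm V | g ∈ G ∧ ∀ w : V, g w ∈ MulAction.orbit (↥M) w}
      = (M : Set (Equiv.Perm V))) ∧
    -- (iii) if H/M is semiregular on Γ/M then H is semiregular on Γ
    (∀ H : Subgroup (Equiv.Perm V), M ≤ H → H ≤ G →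
      (∀ h ∈ H, ∀ w : V, (h : Equiv.Perm V) w ∈ MulAction.orbit (↥M) w → h ∈ M) →
      Semiregular H) := by
  set π : V → Quotient (MulAction.orbitRel (↥M) V) :=
    Quotient.mk (MulAction.orbitRel (↥M) V) with hπ
  -- π is constant on M-orbits
  have hpi : ∀ (m : ↥M) (x : V), π ((m : Equiv.Perm V) x) = π x := by
    intro m x
    exact Quotient.sound ⟨m, rfl⟩
  have hpi' : ∀ {x y : V}, π x = π y → ∃ m : ↥M, (m : Equiv.Perm V) x = y := by
    intro x y h
    obtain ⟨m, hm⟩ := Quotient.exact h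
    exact ⟨m⁻¹, by
      have : (m : Equiv.Perm V) y = x := hm
      simp [← this]⟩
  -- description of the neighbor set in the quotient
  have hNS : ∀ w : V, (quotGraph Γ M).neighborSet (π w)
      = (π '' (Γ.neighborSet w)) \ {π w} := by
    intro w
    ext q
    simp only [SimpleGraph.mem_neighborSet, quotGraph, SimpleGraph.fromRel_adj,
      Set.mem_diff, Set.mem_image, Set.mem_singleton_iff]
    constructor
    · rintro ⟨hne, h | h⟩
      · obtain ⟨u, v, hu, hv, huv⟩ := h
        obtain ⟨m, hm⟩ := hpi' hu
        refine ⟨⟨(m : Equiv.Perm V) v, ?_, ?_⟩, fun h => hne h.symm⟩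
        · rw [← hm]
          exact (hAut _ (hMG m.2) u v).mpr huv
        · rw [hpi]; exact hv
      · obtain ⟨u, v, hu, hv, huv⟩ := h
        obtain ⟨m, hm⟩ := hpi' hv
        refine ⟨⟨(m : Equiv.Perm V) u, ?_, ?_⟩, fun h => hne h.symm⟩
        · rw [← hm]
          exact ((hAut _ (hMG m.2) u v).mpr huv).symm
        · rw [hpi]; exact hu
    · rintro ⟨⟨v, hv, rfl⟩, hne⟩
      exact ⟨fun h => hne h.symm, Or.inl ⟨w, v, rfl, rfl, hv⟩⟩
  -- key combinatorial fact
  have hKey : ∀ w : V, Set.InjOn π (Γ.neighborSet w) ∧ π w ∉ π '' (Γ.neighborSet w) := by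
    intro w
    have hfin : (Γ.neighborSet w).Finite := Set.toFinite _
    have h3 : ((π '' (Γ.neighborSet w)) \ {π w}).ncard = 3 := by
      rw [← hNS]; exact hquotcubic _
    have hfin2 : (π '' (Γ.neighborSet w)).Finite := hfin.image _
    have hle1 : ((π '' (Γ.neighborSet w)) \ {π w}).ncard ≤ (π '' (Γ.neighborSet w)).ncard :=
      Set.ncard_le_ncard Set.diff_subset hfin2
    have hle2 : (π '' (Γ.neighborSet w)).ncard ≤ (Γ.neighborSet w).ncard :=
      Set.ncard_image_le hfin
    have hcard : (π '' (Γ.neighborSet w)).ncard = (Γ.neighborSet w).ncard := by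
      have h4 := hcubic w; omega
    constructor
    · exact Set.injOn_of_ncard_image_eq hcard hfin
    · intro hmem
      have := Set.ncard_diff_singleton_of_mem hmem
      rw [h3, hcard, hcubic w] at this
      omega
  -- propagation of fixed points along the graph
  have hfix : ∀ g : Equiv.Perm V, g ∈ G → (∀ x : V, g x ∈ MulAction.orbit (↥M) x) →
      ∀ v : V, g v = v → ∀ w : V, g w = w := by
    intro g hg horb v hv w
    have key : ∀ (a b : V), Γ.Walk a b → g a = a → g b = b := by
      intro a b p
      induction p with
      | nil => exact id
      | @cons x y z hxy p ih =>
        intro hx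
        apply ih
        have h1 : Γ.Adj x (g y) := by
          have := (hAut g hg x y).mpr hxy
          rwa [hx] at this
        have h2 : π (g y) = π y := by
          obtain ⟨m, hm⟩ := horb y
          rw [← hm]; exact hpi m y
        exact (hKey x).1 h1 hxy h2
    obtain ⟨p⟩ := hconn.preconnected v w
    exact key v w p hv
  -- (i)
  have hi : Semiregular M := by
    intro n hn v hnv
    have hall := hfix n (hMG hn) (fun x => ⟨⟨n, hn⟩, rfl⟩) v hnv
    ext w
    simp [hall w]
  refine ⟨hi, ?_, ?_⟩
  · -- (ii)
    ext g
    simp only [Set.mem_setOf_eq, SetLike.mem_coe]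
    constructor
    · rintro ⟨hgG, horb⟩
      have hV : Nonempty V := hconn.nonempty
      obtain ⟨v⟩ := hV
      obtain ⟨m, hm⟩ := horb v
      set h : Equiv.Perm V := (m : Equiv.Perm V)⁻¹ * g with hh
      have hhG : h ∈ G := mul_mem (inv_mem (hMG m.2)) hgG
      have hhorb : ∀ x : V, h x ∈ MulAction.orbit (↥M) x := by
        intro x
        obtain ⟨m', hm'⟩ := horb x
        refine ⟨m⁻¹ * m', ?_⟩
        have hcx : (m' : Equiv.Perm V) x = g x := hm'
        show ((m⁻¹ * m' : ↥M) : Equiv.Perm V) x = ((m : Equiv.Perm V)⁻¹ * g) x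
        simp [Equiv.Perm.mul_apply, hcx]
      have hhv : h v = v := by
        have : (m : Equiv.Perm V) v = g v := hm
        simp [hh, ← this]
      have hall := hfix h hhG hhorb v hhv
      have h1 : h = 1 := by ext w; simp [hall w]
      have : g = (m : Equiv.Perm V) := by
        have := congrArg (fun z => (m : Equiv.Perm V) * z) h1
        simpa [hh, mul_assoc] using this
      rw [this]; exact m.2
    · intro hg
      exact ⟨hMG hg, fun w => ⟨⟨g, hg⟩, rfl⟩⟩
  · -- (iii)
    intro H hMH hHG hsemi n hn v hnv
    have hnM : n ∈ M := hsemi n hn v (by rw [hnv]; exact ⟨1, by simp⟩)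
    exact hi n hnM v hnv


end Stmt19
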